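/- Let t₀ > 0 satisfy cosh t₀ = t₀ · sinh t₀, and let r, h > 0 with h · sinh t₀ < r. Then the equation r s = cosh(s h) has exactly two positive solutions: there exist s₁, s₂ with 0 < s₁ < s₂, r s₁ = cosh(s₁ h), r s₂ = cosh(s₂ h), and such that every s > 0 with r s = cosh(s h) equals s₁ or s₂. -/

import Mathlib

open Real Set

private lemma cat_hasDerivAt (r h : ℝ) (x : ℝ) :
    HasDerivAt (fun s : ℝ => Real.cosh (s * h) - r * s)
      (h * Real.sinh (x * h) - r) x := by
  have h1 : HasDerivAt (fun s : ℝ => Real.cosh (s * h)) (Real.sinh (x * h) * h) x := by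
    have := (Real.hasDerivAt_cosh (x * h)).comp x ((hasDerivAt_id x).mul_const h)
    simpa [Function.comp_def] using this
  have h2 : HasDerivAt (fun s : ℝ => r * s) r x := by
    simpa using (hasDerivAt_id x).const_mul r
  simpa [mul_comm, Pi.sub_def] using h1.sub h2

private lemma cat_strictConvex (r h : ℝ) (hh : 0 < h) :
    StrictConvexOn ℝ univ (fun s : ℝ => Real.cosh (s * h) - r * s) := by
  apply strictConvexOn_univ_of_deriv2_pos
  · exact (Real.continuous_cosh.comp (continuous_id.mul continuous_const)).sub
      (continuous_const.mul continuous_id)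
  · intro x
    have hd1 : deriv (fun s : ℝ => Real.cosh (s * h) - r * s)
        = fun s : ℝ => h * Real.sinh (s * h) - r := by
      funext y; exact (cat_hasDerivAt r h y).deriv
    have hd2 : HasDerivAt (fun s : ℝ => h * Real.sinh (s * h) - r)
        (h * (Real.cosh (x * h) * h)) x := by
      have h1 : HasDerivAt (fun s : ℝ => Real.sinh (s * h)) (Real.cosh (x * h) * h) x := by
        have := (Real.hasDerivAt_sinh (x * h)).comp x ((hasDerivAt_id x).mul_const h)
        simpa [Function.comp_def] using this
      simpa using (h1.const_mul h).sub_const r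
    have : deriv^[2] (fun s : ℝ => Real.cosh (s * h) - r * s) x
        = h * (Real.cosh (x * h) * h) := by
      simp only [Function.iterate_succ, Function.iterate_zero, Function.comp_apply, id]
      rw [hd1]
      exact hd2.deriv
    rw [this]
    positivity


private lemma cat_exists_big (r h m : ℝ) (hr : 0 < r) (hh : 0 < h) (hm : 0 < m) :
    ∃ M : ℝ, m < M ∧ r * M < Real.cosh (M * h) := by
  have hpos : 0 < 4 * r / h ^ 2 := by positivity
  refine ⟨m + 4 * r / h ^ 2 + 1, by linarith, ?_⟩
  generalize hMdef : m + 4 * r / h ^ 2 + 1 = M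
  have hM0 : 0 < M := by rw [← hMdef]; positivity
  have hMr : 4 * r < M * h ^ 2 := by
    rw [← hMdef]
    have h4 : 4 * r / h ^ 2 * h ^ 2 = 4 * r := by field_simp
    nlinarith
  have hexp : 1 + M * h + (M * h) ^ 2 / 2 ≤ Real.exp (M * h) :=
    Real.quadratic_le_exp_of_nonneg (by positivity)
  have hcosh : Real.exp (M * h) / 2 ≤ Real.cosh (M * h) := by
    rw [Real.cosh_eq]
    have := (Real.exp_pos (-(M * h))).le
    linarith
  have h2 : r * M < (M * h) ^ 2 / 4 := by
    nlinarith [mul_lt_mul_of_pos_left hMr hM0]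
  have hMh : 0 < M * h := by positivity
  linarith

/-- **Existence of exactly two catenoidal slices.**
Let `t₀ > 0` satisfy `cosh t₀ = t₀ sinh t₀` and let `r, h > 0` with `h sinh t₀ < r`.
Then the equation `r s = cosh (s h)` has exactly two positive solutions `s₁ < s₂`
(the stable and the unstable catenoid). -/
theorem exists_two_catenoid_solutions
    (t₀ : ℝ) (ht₀ : 0 < t₀) (ht₀eq : Real.cosh t₀ = t₀ * Real.sinh t₀)
    (r h : ℝ) (hr : 0 < r) (hh : 0 < h) (hrh : h * Real.sinh t₀ < r) :
    ∃ s₁ s₂ : ℝ, 0 < s₁ ∧ s₁ < s₂ ∧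
      r * s₁ = Real.cosh (s₁ * h) ∧ r * s₂ = Real.cosh (s₂ * h) ∧
      ∀ s : ℝ, 0 < s → r * s = Real.cosh (s * h) → s = s₁ ∨ s = s₂ := by
  set f : ℝ → ℝ := fun s => Real.cosh (s * h) - r * s with hf
  have hfc : Continuous f :=
    (Real.continuous_cosh.comp (continuous_id.mul continuous_const)).sub
      (continuous_const.mul continuous_id)
  have hconv : StrictConvexOn ℝ univ f := cat_strictConvex r h hh
  -- key convexity consequence: three ordered zeros are impossible
  have key : ∀ a b c : ℝ, a < b → b < c → f a = 0 → f b = 0 → f c = 0 → False := by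
    intro a b c hab hbc ha hb hc
    set t : ℝ := (c - b) / (c - a) with ht
    have hac : a < c := hab.trans hbc
    have h0 : (0:ℝ) < c - a := by linarith
    have ht0 : 0 < t := by rw [ht]; exact div_pos (by linarith) h0
    have ht1 : 0 < 1 - t := by
      rw [ht]; rw [sub_pos, div_lt_one h0]; linarith
    have hcomb : t * a + (1 - t) * c = b := by
      rw [ht]; field_simp
      ring
    have := hconv.2 (mem_univ a) (mem_univ c) (ne_of_lt hac) ht0 ht1 (by ring)
    rw [smul_eq_mul, smul_eq_mul, smul_eq_mul, smul_eq_mul, hcomb, ha, hb, hc] at this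
    linarith
  -- the midpoint where f is negative
  set m : ℝ := t₀ / h with hm
  have hm0 : 0 < m := by positivity
  have hfm : f m < 0 := by
    have h1 : h * Real.cosh t₀ < r * t₀ := by
      calc h * Real.cosh t₀ = (h * Real.sinh t₀) * t₀ := by rw [ht₀eq]; ring
      _ < r * t₀ := by nlinarith
    have hmh : m * h = t₀ := by rw [hm]; field_simp
    have h2 : Real.cosh t₀ < r * m := by
      rw [hm, ← mul_div_assoc, lt_div_iff₀ hh]
      nlinarith
    show Real.cosh (m * h) - r * m < 0
    rw [hmh]; linarith
  have hf0 : f 0 = 1 := by simp [hf]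
  -- a big point where f is positive
  obtain ⟨M, hmM, hfM⟩ : ∃ M : ℝ, m < M ∧ 0 < f M := by
    obtain ⟨M, h1, h2⟩ := cat_exists_big r h m hr hh hm0
    exact ⟨M, h1, by show 0 < Real.cosh (M * h) - r * M; linarith⟩
  -- first root in (0, m)
  obtain ⟨s₁, hs₁mem, hfs₁⟩ : ∃ s₁ ∈ Ioo (0:ℝ) m, f s₁ = 0 := by
    have := intermediate_value_Ioo' hm0.le hfc.continuousOn
      (show (0:ℝ) ∈ Ioo (f m) (f 0) by rw [hf0]; exact ⟨hfm, one_pos⟩)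
    obtain ⟨s₁, hs₁, hfs₁⟩ := this
    exact ⟨s₁, hs₁, hfs₁⟩
  -- second root in (m, M)
  obtain ⟨s₂, hs₂mem, hfs₂⟩ : ∃ s₂ ∈ Ioo m M, f s₂ = 0 := by
    have := intermediate_value_Ioo hmM.le hfc.continuousOn
      (show (0:ℝ) ∈ Ioo (f m) (f M) from ⟨hfm, hfM⟩)
    obtain ⟨s₂, hs₂, hfs₂⟩ := this
    exact ⟨s₂, hs₂, hfs₂⟩
  refine ⟨s₁, s₂, hs₁mem.1, hs₁mem.2.trans hs₂mem.1, ?_, ?_, ?_⟩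
  · have := hfs₁; simp only [hf] at this; linarith
  · have := hfs₂; simp only [hf] at this; linarith
  · intro s hs hseq
    have hfs : f s = 0 := by simp only [hf]; linarith
    by_contra hcon
    push_neg at hcon
    obtain ⟨hne1, hne2⟩ := hcon
    have h12 : s₁ < s₂ := hs₁mem.2.trans hs₂mem.1
    rcases lt_trichotomy s s₁ with hc | hc | hc
    · exact key s s₁ s₂ hc h12 hfs hfs₁ hfs₂
    · exact hne1 hc
    · rcases lt_trichotomy s s₂ with hc2 | hc2 | hc2
      · exact key s₁ s s₂ hc hc2 hfs₁ hfs hfs₂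
      · exact hne2 hc2
      · exact key s₁ s₂ s h12 hc2 hfs₁ hfs₂ hfs
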